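/- Let n ≥ 1, 0 < α < n, r > 0, x ∈ ℝⁿ, and let f : ℝⁿ → [0,∞] be locally integrable. Then ∫_{B_r(x)} f(y)/|x−y|^{n−α} dy ≤ (2ⁿ·ω_n/(2^α − 1)) · r^α · Mf(x), where ω_n is the Lebesgue measure of the unit ball in ℝⁿ and Mf is the centred Hardy–Littlewood maximal function of f. -/
import Mathlib

open MeasureTheory

/-- The centred Hardy–Littlewood maximal function of `f : ℝⁿ → [0,∞]`. -/
noncomputable def centredMaximal (n : ℕ) (f : EuclideanSpace ℝ (Fin n) → ENNReal)
    (x : EuclideanSpace ℝ (Fin n)) : ENNReal :=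
  ⨆ (ρ : ℝ) (_ : 0 < ρ),
    (∫⁻ y in Metric.ball x ρ, f y) / volume (Metric.ball x ρ)

theorem stmt1 (n : ℕ) (hn : 1 ≤ n) (α r : ℝ) (hα : 0 < α) (hαn : α < n) (hr : 0 < r)
    (x : EuclideanSpace ℝ (Fin n)) (f : EuclideanSpace ℝ (Fin n) → ENNReal)
    (hmeas : Measurable f)
    (hf : LocallyIntegrable (fun y => (f y).toReal) volume) :
    ∫⁻ y in Metric.ball x r, f y / ENNReal.ofReal (dist x y ^ ((n : ℝ) - α)) ≤
      (2 ^ n * volume (Metric.ball (0 : EuclideanSpace ℝ (Fin n)) 1)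
          / ENNReal.ofReal ((2 : ℝ) ^ α - 1))
        * ENNReal.ofReal (r ^ α) * centredMaximal n f x := by
  classical
  haveI : Nonempty (Fin n) := ⟨⟨0, by omega⟩⟩
  haveI : Nontrivial (EuclideanSpace ℝ (Fin n)) := inferInstance
  set M := centredMaximal n f x with hMdef
  set ω := volume (Metric.ball (0 : EuclideanSpace ℝ (Fin n)) 1) with hωdef
  have hnα : (0:ℝ) < (n:ℝ) - α := by linarith
  -- maximal function bound on balls
  have hkey : ∀ ρ : ℝ, 0 < ρ →
      ∫⁻ y in Metric.ball x ρ, f y ≤ volume (Metric.ball x ρ) * M := by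
    intro ρ hρ
    have hv0 : volume (Metric.ball x ρ) ≠ 0 := (Metric.measure_ball_pos volume x hρ).ne'
    have hvt : volume (Metric.ball x ρ) ≠ ⊤ := measure_ball_lt_top.ne
    have h1 : (∫⁻ y in Metric.ball x ρ, f y) / volume (Metric.ball x ρ) ≤ M := by
      rw [hMdef, centredMaximal]
      exact le_iSup₂ (f := fun ρ (_ : 0 < ρ) =>
        (∫⁻ y in Metric.ball x ρ, f y) / volume (Metric.ball x ρ)) ρ hρ
    rwa [ENNReal.div_le_iff hv0 hvt, mul_comm] at h1
  set t : ℕ → ℝ := fun k => r * (2:ℝ)⁻¹ ^ k with htdef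
  have ht0 : ∀ k, 0 < t k := fun k => mul_pos hr (by positivity)
  have ht : ∀ k : ℕ, t k = r * (2:ℝ) ^ (-(k:ℝ)) := by
    intro k
    have h : ((2:ℝ)⁻¹) ^ k = (2:ℝ) ^ (-(k:ℝ)) := by
      rw [Real.rpow_neg (by norm_num), Real.rpow_natCast, inv_pow]
    show r * (2:ℝ)⁻¹ ^ k = r * 2 ^ (-(k:ℝ))
    rw [h]
  set A : ℕ → Set (EuclideanSpace ℝ (Fin n)) :=
    fun k => Metric.ball x (t k) \ Metric.ball x (t (k+1)) with hAdef
  -- annuli cover the punctured ball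
  have hsub : Metric.ball x r \ {x} ⊆ ⋃ k, A k := by
    rintro y ⟨hyr, hyx⟩
    have hd0 : 0 < dist y x := dist_pos.2 (by simpa using hyx)
    have hexists : ∃ k, t k ≤ dist y x := by
      obtain ⟨m, hm⟩ := exists_pow_lt_of_lt_one (div_pos hd0 hr)
        (by norm_num : (2:ℝ)⁻¹ < 1)
      refine ⟨m, ?_⟩
      have := (lt_div_iff₀ hr).mp hm
      simp only [htdef]
      nlinarith
    have hk := Nat.find_spec hexists
    set k := Nat.find hexists with hkdef
    match k, hk, (fun m hm => Nat.find_min hexists hm :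
        ∀ m, m < k → ¬ t m ≤ dist y x) with
    | 0, hk, _ =>
      exfalso
      have h0 : t 0 = r := by simp [htdef]
      rw [h0] at hk
      exact absurd (Metric.mem_ball.mp hyr) (not_lt.mpr hk)
    | (m+1), hk, hmin =>
      refine Set.mem_iUnion.2 ⟨m, ?_, ?_⟩
      · exact Metric.mem_ball.mpr (lt_of_not_ge (hmin m (Nat.lt_succ_self m)))
      · exact fun h => absurd (Metric.mem_ball.mp h) (not_lt.mpr hk)
  -- per-annulus bound
  have hterm : ∀ k, (∫⁻ y in A k, f y / ENNReal.ofReal (dist x y ^ ((n:ℝ)-α))) ≤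
      (ENNReal.ofReal (t k ^ n) * (ENNReal.ofReal (t (k+1) ^ ((n:ℝ)-α)))⁻¹) * (ω * M) := by
    intro k
    set C : ENNReal := ENNReal.ofReal (t (k+1) ^ ((n:ℝ)-α)) with hCdef
    have step1 : (∫⁻ y in A k, f y / ENNReal.ofReal (dist x y ^ ((n:ℝ)-α))) ≤
        ∫⁻ y in A k, f y * C⁻¹ := by
      refine setLIntegral_mono (hmeas.mul_const _) ?_
      intro y hy
      have hdist : t (k+1) ≤ dist x y := by
        rw [dist_comm]
        exact not_lt.mp fun h => hy.2 (Metric.mem_ball.mpr h)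
      have hle : t (k+1) ^ ((n:ℝ)-α) ≤ dist x y ^ ((n:ℝ)-α) :=
        Real.rpow_le_rpow (ht0 (k+1)).le hdist hnα.le
      rw [div_eq_mul_inv]
      exact mul_le_mul_right (ENNReal.inv_le_inv.2 (ENNReal.ofReal_le_ofReal hle)) _
    have step2 : (∫⁻ y in A k, f y * C⁻¹) = (∫⁻ y in A k, f y) * C⁻¹ :=
      lintegral_mul_const _ hmeas
    have step3 : (∫⁻ y in A k, f y) ≤ volume (Metric.ball x (t k)) * M :=
      le_trans (lintegral_mono_set Set.diff_subset) (hkey _ (ht0 k))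
    have hvol : volume (Metric.ball x (t k)) = ENNReal.ofReal (t k ^ n) * ω := by
      rw [hωdef, Measure.addHaar_ball _ _ (ht0 k).le, finrank_euclideanSpace_fin]
    calc (∫⁻ y in A k, f y / ENNReal.ofReal (dist x y ^ ((n:ℝ)-α)))
        ≤ (∫⁻ y in A k, f y) * C⁻¹ := step1.trans step2.le
      _ ≤ (volume (Metric.ball x (t k)) * M) * C⁻¹ := by gcongr
      _ = (ENNReal.ofReal (t k ^ n) * C⁻¹) * (ω * M) := by
          rw [hvol]; ring
  -- real geometric identity
  have hq1 : (2:ℝ) ^ (-α) < 1 :=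
    Real.rpow_lt_one_of_one_lt_of_neg one_lt_two (by linarith)
  have hq0 : (0:ℝ) < (2:ℝ) ^ (-α) := Real.rpow_pos_of_pos two_pos _
  have hreal : ∀ k : ℕ, t k ^ n / t (k+1) ^ ((n:ℝ)-α)
      = (2:ℝ) ^ ((n:ℝ)-α) * r ^ α * ((2:ℝ) ^ (-α)) ^ k := by
    intro k
    have h2 : (0:ℝ) ≤ 2 := by norm_num
    have e1 : t k ^ n = r ^ (n:ℝ) * (2:ℝ) ^ (-(k:ℝ) * (n:ℝ)) := by
      rw [← Real.rpow_natCast (t k) n, ht k,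
        Real.mul_rpow hr.le (Real.rpow_pos_of_pos two_pos _).le,
        ← Real.rpow_mul h2]
    have e2 : t (k+1) ^ ((n:ℝ)-α)
        = r ^ ((n:ℝ)-α) * (2:ℝ) ^ (-((k:ℝ)+1) * ((n:ℝ)-α)) := by
      rw [ht (k+1), Real.mul_rpow hr.le (Real.rpow_pos_of_pos two_pos _).le,
        ← Real.rpow_mul h2]
      push_cast
      ring_nf
    have e3 : ((2:ℝ) ^ (-α)) ^ k = (2:ℝ) ^ (-α * (k:ℝ)) := by
      rw [← Real.rpow_natCast ((2:ℝ) ^ (-α)) k, ← Real.rpow_mul h2]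
    rw [e1, e2, e3, mul_div_mul_comm, ← Real.rpow_sub hr, ← Real.rpow_sub two_pos,
      show (n:ℝ) - ((n:ℝ)-α) = α by ring, mul_comm ((2:ℝ) ^ ((n:ℝ)-α)) (r ^ α),
      mul_assoc, ← Real.rpow_add two_pos]
    congr 1
    ring
  -- ENNReal version of each term
  have hident : ∀ k, ENNReal.ofReal (t k ^ n) * (ENNReal.ofReal (t (k+1) ^ ((n:ℝ)-α)))⁻¹
      = ENNReal.ofReal ((2:ℝ) ^ ((n:ℝ)-α) * r ^ α) * (ENNReal.ofReal ((2:ℝ) ^ (-α)))^k := by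
    intro k
    have hpos : (0:ℝ) < t (k+1) ^ ((n:ℝ)-α) := Real.rpow_pos_of_pos (ht0 _) _
    rw [← ENNReal.ofReal_pow hq0.le, ← ENNReal.ofReal_mul (by positivity),
      ← div_eq_mul_inv, ← ENNReal.ofReal_div_of_pos hpos, hreal k]
  -- sum the geometric series
  have hgeom : ∑' k : ℕ, (ENNReal.ofReal (t k ^ n)
        * (ENNReal.ofReal (t (k+1) ^ ((n:ℝ)-α)))⁻¹) * (ω * M)
      = ENNReal.ofReal ((2:ℝ) ^ ((n:ℝ)-α) * r ^ α)
        * (1 - ENNReal.ofReal ((2:ℝ) ^ (-α)))⁻¹ * (ω * M) := by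
    rw [ENNReal.tsum_mul_right]
    congr 1
    rw [tsum_congr hident, ENNReal.tsum_mul_left, ENNReal.tsum_geometric]
  -- final constant comparison
  have hconst : ENNReal.ofReal ((2:ℝ) ^ ((n:ℝ)-α) * r ^ α)
      * (1 - ENNReal.ofReal ((2:ℝ) ^ (-α)))⁻¹ * (ω * M)
      ≤ (2 ^ n * ω / ENNReal.ofReal ((2:ℝ) ^ α - 1)) * ENNReal.ofReal (r ^ α) * M := by
    have h1 : (1:ENNReal) - ENNReal.ofReal ((2:ℝ) ^ (-α))
        = ENNReal.ofReal (1 - (2:ℝ) ^ (-α)) := by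
      rw [ENNReal.ofReal_sub _ hq0.le, ENNReal.ofReal_one]
    have hb : (0:ℝ) < 1 - (2:ℝ) ^ (-α) := by linarith
    have h2α : (1:ℝ) < (2:ℝ) ^ α := Real.one_lt_rpow one_lt_two hα
    have ha : (0:ℝ) < (2:ℝ) ^ α - 1 := by linarith
    have h2αpos : (0:ℝ) < (2:ℝ) ^ α := by linarith
    have hc : (2:ℝ) ^ ((n:ℝ)-α) * r ^ α / (1 - (2:ℝ) ^ (-α))
        = (2:ℝ) ^ n / ((2:ℝ) ^ α - 1) * r ^ α := by
      rw [Real.rpow_sub two_pos, Real.rpow_neg (by norm_num : (0:ℝ) ≤ 2),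
        Real.rpow_natCast]
      have hbne : 1 - ((2:ℝ) ^ α)⁻¹ ≠ 0 := by
        have : ((2:ℝ) ^ α)⁻¹ < 1 := by
          rw [inv_lt_one_iff₀]; right; exact h2α
        linarith
      field_simp
    have h2n : ((2:ENNReal)) ^ n = ENNReal.ofReal ((2:ℝ) ^ n) := by
      rw [ENNReal.ofReal_pow (by norm_num)]
      norm_num
    have hL : ENNReal.ofReal ((2:ℝ) ^ ((n:ℝ)-α) * r ^ α)
        * (1 - ENNReal.ofReal ((2:ℝ) ^ (-α)))⁻¹
        = 2 ^ n / ENNReal.ofReal ((2:ℝ) ^ α - 1) * ENNReal.ofReal (r ^ α) := by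
      rw [h1, ← div_eq_mul_inv, ← ENNReal.ofReal_div_of_pos hb, hc,
        ENNReal.ofReal_mul (by positivity), ENNReal.ofReal_div_of_pos ha, h2n]
    rw [hL]
    apply le_of_eq
    rw [div_eq_mul_inv, div_eq_mul_inv]
    ring
  calc ∫⁻ y in Metric.ball x r, f y / ENNReal.ofReal (dist x y ^ ((n:ℝ)-α))
      = ∫⁻ y in Metric.ball x r \ {x},
          f y / ENNReal.ofReal (dist x y ^ ((n:ℝ)-α)) := by
        refine setLIntegral_congr ?_
        exact (diff_ae_eq_self.2 (measure_mono_null Set.inter_subset_right (measure_singleton x))).symm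
    _ ≤ ∫⁻ y in ⋃ k, A k, f y / ENNReal.ofReal (dist x y ^ ((n:ℝ)-α)) :=
        lintegral_mono_set hsub
    _ ≤ ∑' k, ∫⁻ y in A k, f y / ENNReal.ofReal (dist x y ^ ((n:ℝ)-α)) :=
        lintegral_iUnion_le _ _
    _ ≤ ∑' k, (ENNReal.ofReal (t k ^ n)
          * (ENNReal.ofReal (t (k+1) ^ ((n:ℝ)-α)))⁻¹) * (ω * M) :=
        ENNReal.tsum_le_tsum hterm
    _ = ENNReal.ofReal ((2:ℝ) ^ ((n:ℝ)-α) * r ^ α)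
          * (1 - ENNReal.ofReal ((2:ℝ) ^ (-α)))⁻¹ * (ω * M) := hgeom
    _ ≤ _ := hconst
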